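/- The function C_i(t) := t · ₂F₁(3/4, 3/4; 3/2; 4t²) / ₂F₁(1/4, 1/4; 1/2; 4t²) is well-defined and holomorphic on the disc |t| < 1/2, and satisfies C_i(0) = 0. -/

import Mathlib

open Complex

/-- The Gaussian hypergeometric series. -/
noncomputable def hyp2F1 (a b c z : ℂ) : ℂ :=
  ∑' n : ℕ, (ascPochhammer ℂ n).eval a * (ascPochhammer ℂ n).eval b /
    ((ascPochhammer ℂ n).eval c * (n.factorial : ℂ)) * z ^ n

/-- `C_i(t) = t · ₂F₁(3/4,3/4;3/2;4t²)/₂F₁(1/4,1/4;1/2;4t²)`. -/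
noncomputable def Ci (t : ℂ) : ℂ :=
  t * hyp2F1 (3/4) (3/4) (3/2) (4 * t ^ 2) / hyp2F1 (1/4) (1/4) (1/2) (4 * t ^ 2)

/-! ### Auxiliary material -/

/-- The real coefficients of the series `₂F₁(x,x;y;z)`. -/
noncomputable def hcoef (x y : ℝ) (n : ℕ) : ℝ :=
  ((ascPochhammer ℝ n).eval x) ^ 2 / ((ascPochhammer ℝ n).eval y * n.factorial)

lemma asc_eval_ofReal (n : ℕ) (x : ℝ) :
    (ascPochhammer ℂ n).eval (x : ℂ) = (((ascPochhammer ℝ n).eval x : ℝ) : ℂ) := by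
  rw [ascPochhammer_eval₂ (algebraMap ℝ ℂ) n, show ((x : ℂ)) = algebraMap ℝ ℂ x from rfl,
    Polynomial.eval₂_at_apply]
  rfl

lemma hyp2F1_eq_tsum (x y : ℝ) (z : ℂ) :
    hyp2F1 (x : ℂ) (x : ℂ) (y : ℂ) z = ∑' n : ℕ, (hcoef x y n : ℂ) * z ^ n := by
  unfold hyp2F1
  refine tsum_congr fun n => ?_
  rw [asc_eval_ofReal, asc_eval_ofReal]
  congr 1
  rw [hcoef]
  push_cast
  ring

lemma hcoef_pos {x y : ℝ} (hx : 0 < x) (hy : 0 < y) (n : ℕ) : 0 < hcoef x y n := by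
  have h1 := ascPochhammer_pos n x hx
  have h2 := ascPochhammer_pos n y hy
  have h3 : (0 : ℝ) < n.factorial := by exact_mod_cast n.factorial_pos
  exact div_pos (pow_pos h1 2) (mul_pos h2 h3)

lemma hcoef_zero (x y : ℝ) : hcoef x y 0 = 1 := by
  simp [hcoef]

lemma hcoef_succ_le {x y : ℝ} (hx : 0 < x) (hy : 0 < y) (hx2 : x ^ 2 ≤ y)
    (hxy : 2 * x ≤ y + 1) (n : ℕ) : hcoef x y (n + 1) ≤ hcoef x y n := by
  have hA := ascPochhammer_pos n x hx
  have hB := ascPochhammer_pos n y hy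
  have hF : (0 : ℝ) < n.factorial := by exact_mod_cast n.factorial_pos
  have hn : (0 : ℝ) ≤ (n : ℝ) := n.cast_nonneg
  have hyn : (0 : ℝ) < y + n := by linarith
  have hn1 : (0 : ℝ) < (n : ℝ) + 1 := by linarith
  have key : (x + n) ^ 2 ≤ (y + n) * ((n : ℝ) + 1) := by nlinarith
  have e1 : hcoef x y (n + 1) = hcoef x y n * ((x + n) ^ 2 / ((y + n) * ((n : ℝ) + 1))) := by
    unfold hcoef
    rw [ascPochhammer_succ_right, Nat.factorial_succ]
    simp only [Polynomial.eval_mul, Polynomial.eval_add, Polynomial.eval_X,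
      Polynomial.eval_natCast]
    push_cast
    field_simp
  have hr : (x + n) ^ 2 / ((y + n) * ((n : ℝ) + 1)) ≤ 1 := by
    rw [div_le_one (by positivity)]
    exact key
  calc hcoef x y (n + 1) = hcoef x y n * ((x + n) ^ 2 / ((y + n) * ((n : ℝ) + 1))) := e1
    _ ≤ hcoef x y n * 1 :=
      mul_le_mul_of_nonneg_left hr (le_of_lt (hcoef_pos hx hy n))
    _ = hcoef x y n := mul_one _

lemma hcoef_le_one {x y : ℝ} (hx : 0 < x) (hy : 0 < y) (hx2 : x ^ 2 ≤ y)
    (hxy : 2 * x ≤ y + 1) (n : ℕ) : hcoef x y n ≤ 1 := by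
  have : ∀ m, hcoef x y m ≤ hcoef x y 0 := by
    intro m
    induction m with
    | zero => exact le_refl _
    | succ k ih => exact le_trans (hcoef_succ_le hx hy hx2 hxy k) ih
  simpa [hcoef_zero] using this n

set_option maxHeartbeats 1000000 in
/-- Key nonvanishing lemma: a power series with positive decreasing coefficients
starting at `1` does not vanish on the open unit disc. -/
lemma hyp_ne_zero {x y : ℝ} (hx : 0 < x) (hy : 0 < y) (hx2 : x ^ 2 ≤ y)
    (hxy : 2 * x ≤ y + 1) {z : ℂ} (hz : ‖z‖ < 1) :
    hyp2F1 (x : ℂ) (x : ℂ) (y : ℂ) z ≠ 0 := by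
  have hdec := hcoef_succ_le hx hy hx2 hxy
  have hpos := hcoef_pos hx hy
  have hle1 := hcoef_le_one hx hy hx2 hxy
  set a : ℕ → ℝ := hcoef x y with ha
  -- summability facts
  have hgeom : Summable fun n : ℕ => ‖z‖ ^ n :=
    summable_geometric_of_lt_one (norm_nonneg z) hz
  have hsum : Summable fun n : ℕ => (a n : ℂ) * z ^ n := by
    refine Summable.of_norm_bounded hgeom fun n => ?_
    rw [norm_mul, norm_pow, Complex.norm_real, Real.norm_eq_abs,
      _root_.abs_of_pos (hpos n)]
    have := pow_nonneg (norm_nonneg z) n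
    nlinarith [hle1 n]
  have hsum₂ : Summable fun n : ℕ => (a n : ℂ) * z ^ (n + 1) := by
    have := hsum.mul_right z
    refine this.congr fun n => ?_
    rw [pow_succ]; ring
  have hsum₁ : Summable fun n : ℕ => (a (n + 1) : ℂ) * z ^ (n + 1) :=
    (summable_nat_add_iff 1).mpr hsum
  -- telescoping sum of differences
  have hnn : ∀ n, 0 ≤ a n - a (n + 1) := fun n => sub_nonneg.2 (hdec n)
  have hpartial : ∀ n, ∑ i ∈ Finset.range n, (a i - a (i + 1)) ≤ 1 := by
    intro n
    rw [Finset.sum_range_sub' a n]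
    have h0 : a 0 = 1 := hcoef_zero x y
    have := hpos n
    linarith
  have hd : Summable fun n => a n - a (n + 1) := summable_of_sum_range_le hnn hpartial
  have hdsum : ∑' n, (a n - a (n + 1)) ≤ 1 := Real.tsum_le_of_sum_range_le hnn hpartial
  -- the series rewriting
  rw [hyp2F1_eq_tsum]
  intro h0
  -- compute (1 - z) * f
  have hzt : z * ∑' n, (a n : ℂ) * z ^ n = ∑' n, (a n : ℂ) * z ^ (n + 1) := by
    rw [← tsum_mul_left]
    exact tsum_congr fun n => by ring
  have e : (1 - z) * (∑' n, (a n : ℂ) * z ^ n)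
      = 1 + ∑' n, ((a (n + 1) : ℂ) - (a n : ℂ)) * z ^ (n + 1) := by
    rw [sub_mul, one_mul, hzt, Summable.tsum_eq_zero_add hsum]
    have h00 : (a 0 : ℂ) * z ^ 0 = 1 := by
      simp [ha, hcoef_zero]
    rw [h00, add_sub_assoc, ← Summable.tsum_sub hsum₁ hsum₂]
    congr 1
    exact tsum_congr fun n => by ring
  -- bound the tail
  have hbnd : ∀ n, ‖((a (n + 1) : ℂ) - (a n : ℂ)) * z ^ (n + 1)‖
      ≤ (a n - a (n + 1)) * ‖z‖ := by
    intro n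
    rw [norm_mul, norm_pow]
    have h1 : ‖((a (n + 1) : ℂ) - (a n : ℂ))‖ = a n - a (n + 1) := by
      rw [← Complex.ofReal_sub, Complex.norm_real, Real.norm_eq_abs, abs_sub_comm,
        _root_.abs_of_nonneg (hnn n)]
    rw [h1]
    refine mul_le_mul_of_nonneg_left ?_ (hnn n)
    calc ‖z‖ ^ (n + 1) = ‖z‖ ^ n * ‖z‖ := pow_succ _ _
      _ ≤ 1 * ‖z‖ :=
        mul_le_mul_of_nonneg_right (pow_le_one₀ (norm_nonneg z) hz.le) (norm_nonneg z)
      _ = ‖z‖ := one_mul _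
  have hdz : Summable fun n => (a n - a (n + 1)) * ‖z‖ := hd.mul_right _
  have hsnorm : Summable fun n => ‖((a (n + 1) : ℂ) - (a n : ℂ)) * z ^ (n + 1)‖ :=
    Summable.of_nonneg_of_le (fun n => norm_nonneg _) hbnd hdz
  have hnorm : ‖∑' n, ((a (n + 1) : ℂ) - (a n : ℂ)) * z ^ (n + 1)‖ < 1 := by
    calc ‖∑' n, ((a (n + 1) : ℂ) - (a n : ℂ)) * z ^ (n + 1)‖
        ≤ ∑' n, ‖((a (n + 1) : ℂ) - (a n : ℂ)) * z ^ (n + 1)‖ :=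
          norm_tsum_le_tsum_norm hsnorm
      _ ≤ ∑' n, (a n - a (n + 1)) * ‖z‖ := Summable.tsum_le_tsum hbnd hsnorm hdz
      _ = (∑' n, (a n - a (n + 1))) * ‖z‖ := tsum_mul_right
      _ ≤ 1 * ‖z‖ := mul_le_mul_of_nonneg_right hdsum (norm_nonneg z)
      _ = ‖z‖ := one_mul _
      _ < 1 := hz
  rw [h0, mul_zero] at e
  have : ‖∑' n, ((a (n + 1) : ℂ) - (a n : ℂ)) * z ^ (n + 1)‖ = 1 := by
    have hS : (∑' n, ((a (n + 1) : ℂ) - (a n : ℂ)) * z ^ (n + 1)) = -1 := by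
      linear_combination -e
    rw [hS, norm_neg, norm_one]
  linarith

open scoped ENNReal NNReal in
/-- Differentiability of a power series with bounded coefficients on the unit disc. -/
lemma diffOn_tsum (a : ℕ → ℝ) (ha : ∀ n, |a n| ≤ 1) :
    DifferentiableOn ℂ (fun z : ℂ => ∑' n : ℕ, (a n : ℂ) * z ^ n) (Metric.ball 0 1) := by
  set p : FormalMultilinearSeries ℂ ℂ ℂ :=
    fun n => ContinuousMultilinearMap.mkPiRing ℂ (Fin n) ((a n : ℂ)) with hp
  have hr : (1 : ℝ≥0∞) ≤ p.radius := by
    have := p.le_radius_of_bound 1 (r := 1) ?_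
    · simpa using this
    · intro n
      rw [hp]
      rw [ContinuousMultilinearMap.norm_mkPiRing, Complex.norm_real, Real.norm_eq_abs]
      simpa using ha n
  have h0 : 0 < p.radius := lt_of_lt_of_le one_pos hr
  have hdiff : DifferentiableOn ℂ p.sum (EMetric.ball 0 p.radius) :=
    (p.hasFPowerSeriesOnBall h0).differentiableOn
  have heq : ∀ z : ℂ, p.sum z = ∑' n : ℕ, (a n : ℂ) * z ^ n := by
    intro z
    unfold FormalMultilinearSeries.sum
    refine tsum_congr fun n => ?_
    rw [hp]
    simp [ContinuousMultilinearMap.mkPiRing_apply, smul_eq_mul, mul_comm]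
  have hdiff' : DifferentiableOn ℂ (fun z : ℂ => ∑' n : ℕ, (a n : ℂ) * z ^ n)
      (EMetric.ball 0 p.radius) := hdiff.congr fun z _ => (heq z).symm
  refine hdiff'.mono ?_
  intro w hw
  have : w ∈ Metric.eball (0 : ℂ) ((1 : ℝ≥0) : ℝ≥0∞) := by
    rw [Metric.emetric_ball_nnreal]
    simpa using hw
  exact Metric.eball_subset_eball (by simpa using hr) this

lemma hypF_eq (w : ℂ) :
    hyp2F1 (1/4) (1/4) (1/2) w = ∑' n : ℕ, (hcoef (1/4) (1/2) n : ℂ) * w ^ n := by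
  have := hyp2F1_eq_tsum (1/4) (1/2) w
  norm_num at this ⊢
  exact this

lemma hypG_eq (w : ℂ) :
    hyp2F1 (3/4) (3/4) (3/2) w = ∑' n : ℕ, (hcoef (3/4) (3/2) n : ℂ) * w ^ n := by
  have := hyp2F1_eq_tsum (3/4) (3/2) w
  norm_num at this ⊢
  exact this

lemma hcoefF_abs_le (n : ℕ) : |hcoef (1/4) (1/2) n| ≤ 1 := by
  have h1 : (0:ℝ) < 1/4 := by norm_num
  have h2 : (0:ℝ) < 1/2 := by norm_num
  rw [_root_.abs_of_pos (hcoef_pos h1 h2 n)]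
  exact hcoef_le_one h1 h2 (by norm_num) (by norm_num) n

lemma hcoefG_abs_le (n : ℕ) : |hcoef (3/4) (3/2) n| ≤ 1 := by
  have h1 : (0:ℝ) < 3/4 := by norm_num
  have h2 : (0:ℝ) < 3/2 := by norm_num
  rw [_root_.abs_of_pos (hcoef_pos h1 h2 n)]
  exact hcoef_le_one h1 h2 (by norm_num) (by norm_num) n

lemma norm_four_sq_lt {t : ℂ} (ht : t ∈ Metric.ball (0 : ℂ) (1/2)) : ‖4 * t ^ 2‖ < 1 := by
  rw [mem_ball_zero_iff] at ht
  have h : ‖4 * t ^ 2‖ = 4 * ‖t‖ ^ 2 := by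
    rw [norm_mul, norm_pow]
    norm_num
  rw [h]
  nlinarith [norm_nonneg t]

lemma denom_ne_zero {t : ℂ} (ht : t ∈ Metric.ball (0 : ℂ) (1/2)) :
    hyp2F1 (1/4) (1/4) (1/2) (4 * t ^ 2) ≠ 0 := by
  have hz := norm_four_sq_lt ht
  have := hyp_ne_zero (x := 1/4) (y := 1/2) (by norm_num) (by norm_num)
    (by norm_num) (by norm_num) hz
  norm_num at this
  exact this

/-- `C_i` is well-defined (denominator nonvanishing) and holomorphic on
`|t| < 1/2`, with `C_i(0) = 0`. -/
theorem stmt_3 :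
    (∀ t ∈ Metric.ball (0 : ℂ) (1/2),
      hyp2F1 (1/4) (1/4) (1/2) (4 * t ^ 2) ≠ 0) ∧
    DifferentiableOn ℂ Ci (Metric.ball (0 : ℂ) (1/2)) ∧
    Ci 0 = 0 := by
  refine ⟨fun t ht => denom_ne_zero ht, ?_, ?_⟩
  · intro t ht
    apply DifferentiableAt.differentiableWithinAt
    have hz : (4 * t ^ 2) ∈ Metric.ball (0 : ℂ) 1 :=
      mem_ball_zero_iff.2 (norm_four_sq_lt ht)
    have hq : DifferentiableAt ℂ (fun s : ℂ => 4 * s ^ 2) t := by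
      apply DifferentiableAt.const_mul
      exact differentiableAt_pow 2
    have hF : DifferentiableAt ℂ (fun z : ℂ => ∑' n : ℕ, (hcoef (1/4) (1/2) n : ℂ) * z ^ n)
        (4 * t ^ 2) :=
      (diffOn_tsum _ hcoefF_abs_le).differentiableAt (Metric.isOpen_ball.mem_nhds hz)
    have hG : DifferentiableAt ℂ (fun z : ℂ => ∑' n : ℕ, (hcoef (3/4) (3/2) n : ℂ) * z ^ n)
        (4 * t ^ 2) :=
      (diffOn_tsum _ hcoefG_abs_le).differentiableAt (Metric.isOpen_ball.mem_nhds hz)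
    have hne : hyp2F1 (1/4) (1/4) (1/2) (4 * t ^ 2) ≠ 0 := denom_ne_zero ht
    have hCi : Ci = fun s : ℂ =>
        s * (fun z : ℂ => ∑' n : ℕ, (hcoef (3/4) (3/2) n : ℂ) * z ^ n) (4 * s ^ 2) /
          (fun z : ℂ => ∑' n : ℕ, (hcoef (1/4) (1/2) n : ℂ) * z ^ n) (4 * s ^ 2) := by
      funext s
      simp only [Ci, hypF_eq, hypG_eq]
    rw [hCi]
    refine DifferentiableAt.div ?_ (hF.comp t hq :) ?_
    · exact differentiableAt_id.mul (hG.comp t hq :)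
    · simpa only [← hypF_eq] using hne
  · simp [Ci]
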